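/- arXiv:2109.13887 — 6 statements merged into one kernel-verified Lean document; each statement's English description precedes it below -/
import Mathlib

section
/- For every connected graph G of order n with minimum degree δ ≥ 2, the diameter of G is at most 3n/(δ+1) + O(1); concretely, diam(G) ≤ 3n/(δ+1) - 1. -/
open SimpleGraph

private lemma walk_dist_le' {V : Type*} {G : SimpleGraph V} (hconn : G.Connected)
    {u v : V} (w : G.Walk u v) (i k : ℕ) (h : i + k ≤ w.length) :
    G.dist (w.getVert i) (w.getVert (i + k)) ≤ k := by
  induction k with
  | zero => simp
  | succ k ih =>
    have h1 : i + k ≤ w.length := by omega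
    have h2 : i + k < w.length := by omega
    have hadj := w.adj_getVert_succ h2
    have htri := hconn.dist_triangle (u := w.getVert i) (v := w.getVert (i + k))
      (w := w.getVert (i + k + 1))
    have h3 : G.dist (w.getVert (i + k)) (w.getVert (i + k + 1)) = 1 :=
      dist_eq_one_iff_adj.mpr hadj
    have := ih h1
    have hik : i + (k + 1) = i + k + 1 := by omega
    rw [hik]
    omega

private lemma walk_dist_ge' {V : Type*} {G : SimpleGraph V} (hconn : G.Connected)
    {u v : V} (w : G.Walk u v) (hw : w.length = G.dist u v) (i j : ℕ)
    (hij : i ≤ j) (hj : j ≤ w.length) :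
    j - i ≤ G.dist (w.getVert i) (w.getVert j) := by
  have h1 : G.dist u (w.getVert i) ≤ i := by
    have := walk_dist_le' hconn w 0 i (by omega)
    simpa using this
  have h2 : G.dist (w.getVert j) v ≤ w.length - j := by
    have := walk_dist_le' hconn w j (w.length - j) (by omega)
    rwa [Nat.add_sub_cancel' hj, w.getVert_length] at this
  have htri1 := hconn.dist_triangle (u := u) (v := w.getVert i) (w := v)
  have htri2 := hconn.dist_triangle (u := w.getVert i) (v := w.getVert j) (w := v)
  omega

theorem stmt_0 {V : Type*} [Fintype V] (G : SimpleGraph V) [DecidableRel G.Adj]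
    (n δ : ℕ) (hn : Fintype.card V = n) (hδ : 2 ≤ δ)
    (hconn : G.Connected) (hdeg : δ ≤ G.minDegree) :
    (G.diam : ℝ) ≤ 3 * n / (δ + 1) - 1 := by
  classical
  have : Nonempty V := hconn.nonempty
  obtain ⟨u, v, huv⟩ := G.exists_dist_eq_diam
  obtain ⟨w, hw⟩ := (hconn u v).exists_walk_length_eq_dist
  set d := G.diam with hd
  have hwl : w.length = d := by rw [hw, huv]
  set k := d / 3 with hk
  have h3k : 3 * k ≤ d := Nat.mul_div_le d 3
  set x : ℕ → V := fun i => w.getVert (3 * i) with hx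
  have hdistge : ∀ i j, i < j → j ≤ k → 3 ≤ G.dist (x i) (x j) := by
    intro i j hij hj
    have h1 : 3 * i ≤ 3 * j := by omega
    have h2 : 3 * j ≤ w.length := by omega
    have := walk_dist_ge' hconn w (by rw [hw]) (3 * i) (3 * j) h1 h2
    have h3 : 3 ≤ 3 * j - 3 * i := by omega
    simp only [hx]
    omega
  set S : ℕ → Finset V := fun i => insert (x i) (G.neighborFinset (x i)) with hS
  have hcard : ∀ i, δ + 1 ≤ (S i).card := by
    intro i
    have hnm : x i ∉ G.neighborFinset (x i) := by simp
    rw [hS]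
    simp only [Finset.card_insert_of_notMem hnm, card_neighborFinset_eq_degree]
    have := G.minDegree_le_degree (x i)
    omega
  have hdisj : ∀ i ∈ Finset.range (k + 1), ∀ j ∈ Finset.range (k + 1), i ≠ j →
      Disjoint (S i) (S j) := by
    have key : ∀ i j, i < j → j ≤ k → Disjoint (S i) (S j) := by
      intro i j hij hj
      rw [Finset.disjoint_left]
      intro y hyi hyj
      have h1 : G.dist (x i) y ≤ 1 := by
        rw [hS] at hyi
        simp only [Finset.mem_insert, mem_neighborFinset] at hyi
        rcases hyi with rfl | h
        · simp [SimpleGraph.dist_self]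
        · exact le_of_eq (dist_eq_one_iff_adj.mpr h)
      have h2 : G.dist y (x j) ≤ 1 := by
        rw [hS] at hyj
        simp only [Finset.mem_insert, mem_neighborFinset] at hyj
        rcases hyj with rfl | h
        · simp [SimpleGraph.dist_self]
        · exact le_of_eq (dist_eq_one_iff_adj.mpr h.symm)
      have htri := hconn.dist_triangle (u := x i) (v := y) (w := x j)
      have := hdistge i j hij hj
      omega
    intro i hi j hj hij
    simp only [Finset.mem_range] at hi hj
    rcases lt_or_gt_of_ne hij with h | h
    · exact key i j h (by omega)
    · exact (key j i h (by omega)).symm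
  have hcount : (k + 1) * (δ + 1) ≤ n := by
    have hbU := Finset.card_biUnion hdisj
    have hle : ((Finset.range (k + 1)).biUnion S).card ≤ n := by
      rw [← hn]; exact Finset.card_le_univ _
    have hsum : (k + 1) * (δ + 1) ≤ ∑ i ∈ Finset.range (k + 1), (S i).card := by
      calc (k + 1) * (δ + 1) = ∑ _i ∈ Finset.range (k + 1), (δ + 1) := by
            rw [Finset.sum_const, Finset.card_range, smul_eq_mul]
        _ ≤ ∑ i ∈ Finset.range (k + 1), (S i).card :=
            Finset.sum_le_sum fun i _ => hcard i
    omega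
  have hdle : d ≤ 3 * k + 2 := by
    have := Nat.div_add_mod d 3
    have := Nat.mod_lt d (show 0 < 3 by norm_num)
    omega
  have hnat : (d + 1) * (δ + 1) ≤ 3 * n := by
    calc (d + 1) * (δ + 1) ≤ (3 * k + 3) * (δ + 1) := by
          apply Nat.mul_le_mul_right; omega
      _ = 3 * ((k + 1) * (δ + 1)) := by ring
      _ ≤ 3 * n := by omega
  have hδ1 : (0 : ℝ) < (δ : ℝ) + 1 := by positivity
  have hreal : ((d : ℝ) + 1) * ((δ : ℝ) + 1) ≤ 3 * n := by exact_mod_cast hnat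
  have : (d : ℝ) + 1 ≤ 3 * n / ((δ : ℝ) + 1) := (le_div_iff₀ hδ1).mpr hreal
  linarith
end

section
/- Let G be a connected graph with a distinguished vertex x of eccentricity equal to diam(G) = D ≥ 2, equipped with a proper k-coloring (k ≥ 3), and layers L_i consisting of vertices at distance i from x. If the last layer L_D uses more than one color, then one can modify G (moving all vertices of L_D not of a chosen color A into layer D−1 and adding edges to differently colored vertices of L_{D−2}) to obtain a connected k-colored layered graph G' with the same order, diameter, and minimum-degree lower bound, in which both the first and last layers use exactly one color, and the layers L_0,...,L_{D−2} are unchanged. -/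
open SimpleGraph

lemma walk_lower {V : Type*} {G : SimpleGraph V} {f : V → ℕ}
    (hf : ∀ a b, G.Adj a b → f b ≤ f a + 1) :
    ∀ {u v : V} (p : G.Walk u v), f v ≤ p.length + f u := by
  intro u v p
  induction p with
  | nil => simp
  | @cons a b c h q ih =>
      have := hf a b h
      simp only [SimpleGraph.Walk.length_cons]
      omega

lemma step_down {V : Type*} {G : SimpleGraph V} (hconn : G.Connected) {x u : V} {n : ℕ}
    (h : G.dist x u = n + 1) : ∃ w, G.dist x w = n := by
  obtain ⟨p, hp⟩ := hconn.exists_walk_length_eq_dist x u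
  have hnil : ¬ p.reverse.Nil := by
    rw [SimpleGraph.Walk.nil_iff_length_eq]
    simp [hp, h]
  obtain ⟨w, hadj, q, hq⟩ := SimpleGraph.Walk.not_nil_iff.mp hnil
  have hlq : q.length = n := by
    have := congrArg SimpleGraph.Walk.length hq
    simp only [SimpleGraph.Walk.length_reverse, SimpleGraph.Walk.length_cons] at this
    omega
  have h1 : G.dist x w ≤ n := by
    have := SimpleGraph.dist_le q.reverse
    simpa [hlq, SimpleGraph.dist_comm] using this
  have h2 : n ≤ G.dist x w := by
    have htri := hconn.dist_triangle (u := x) (v := w) (w := u)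
    have : G.dist w u = 1 := SimpleGraph.dist_eq_one_iff_adj.mpr hadj.symm
    omega
  exact ⟨w, le_antisymm h1 h2⟩

lemma exists_at_dist {V : Type*} {G : SimpleGraph V} (hconn : G.Connected) {x v : V} {D : ℕ}
    (hv : G.dist x v = D) {j : ℕ} (hj : j ≤ D) : ∃ u, G.dist x u = j := by
  have key : ∀ m : ℕ, ∃ u, G.dist x u = D - m := by
    intro m
    induction m with
    | zero => exact ⟨v, by simpa using hv⟩
    | succ m ih =>
        obtain ⟨u, hu⟩ := ih
        by_cases hm : D - m = 0
        · exact ⟨u, by omega⟩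
        · obtain ⟨n, hn⟩ : ∃ n, D - m = n + 1 := ⟨D - m - 1, by omega⟩
          obtain ⟨w, hw⟩ := step_down hconn (hu.trans hn)
          exact ⟨w, by omega⟩
  obtain ⟨u, hu⟩ := key (D - j)
  exact ⟨u, by omega⟩

/-- Each layer `L_i` is the set of vertices at distance `i` from the root. -/
noncomputable def layer {V : Type*} [Fintype V] [DecidableEq V] (G : SimpleGraph V) (x : V) (i : ℕ) :
    Finset V :=
  Finset.univ.filter (fun v => G.dist x v = i)

theorem stmt_4 {V : Type*} [Fintype V] [DecidableEq V] (k D δ : ℕ) (hk : 3 ≤ k) (hD : 2 ≤ D)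
    (G' : SimpleGraph V) [DecidableRel G'.Adj] (hconn : G'.Connected)
    (c' : G'.Coloring (Fin k)) (x : V)
    (hdiam : G'.diam = D)
    (hecc_le : ∀ v, G'.dist x v ≤ D) (hecc_eq : ∃ v, G'.dist x v = D)
    (hmindeg : ∀ v, δ ≤ (G'.neighborSet v).ncard)
    (hmulti : 1 < ((layer G' x D).image c').card) :
    ∃ (G : SimpleGraph V) (_ : DecidableRel G.Adj) (c : G.Coloring (Fin k)) (y : V),
      G.Connected ∧ G.diam = D ∧ (∀ v, δ ≤ (G.neighborSet v).ncard) ∧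
      (∀ v, G.dist y v ≤ D) ∧
      ((layer G y 0).image c).card = 1 ∧
      ((layer G y D).image c).card = 1 ∧
      (∀ v, c v = c' v) ∧
      (∀ i, i ≤ D - 2 → layer G y i = layer G' x i) := by
  classical
  obtain ⟨v0, hv0⟩ := hecc_eq
  obtain ⟨u0, hu0⟩ := exists_at_dist hconn hv0 (Nat.sub_le D 2)
  -- choose the color A of the final layer
  obtain ⟨A, hA1, hA2⟩ :
      ∃ A : Fin k, (∃ w, G'.dist x w = D ∧ c' w = A) ∧
        (∀ v, G'.dist x v = D → c' v ≠ A → ∃ u, G'.dist x u = D - 2 ∧ c' u ≠ c' v) := by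
    by_cases hB : ∃ w, G'.dist x w = D ∧ c' w = c' u0
    · exact ⟨c' u0, hB, fun v hv hne => ⟨u0, hu0, fun h => hne h.symm⟩⟩
    · exact ⟨c' v0, ⟨v0, hv0, rfl⟩, fun v hv _ => ⟨u0, hu0, fun h => hB ⟨v, hv, h.symm⟩⟩⟩
  set M : Set V := {v | G'.dist x v = D ∧ c' v ≠ A} with hM
  have hmemM : ∀ v, v ∈ M ↔ G'.dist x v = D ∧ c' v ≠ A := fun v => Iff.rfl
  -- the attachment vertex for each moved vertex
  have hchoice : ∀ v : V, ∃ u, v ∈ M → G'.dist x u = D - 2 ∧ c' u ≠ c' v := by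
    intro v
    by_cases hv : v ∈ M
    · obtain ⟨u, hu⟩ := hA2 v ((hmemM v).mp hv).1 ((hmemM v).mp hv).2
      exact ⟨u, fun _ => hu⟩
    · exact ⟨v, fun h => absurd h hv⟩
  choose u hu using hchoice
  set G : SimpleGraph V := G' ⊔ SimpleGraph.fromEdgeSet {e | ∃ v ∈ M, e = s(v, u v)} with hG
  have hle : G' ≤ G := le_sup_left
  have hDm2 : ∀ v ∈ M, G'.dist x (u v) = D - 2 := fun v hv => (hu v hv).1
  have hcne : ∀ v ∈ M, c' (u v) ≠ c' v := fun v hv => (hu v hv).2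
  have huM : ∀ v ∈ M, u v ∉ M := by
    intro v hv hmem
    have h1 := hDm2 v hv
    have h2 := ((hmemM _).mp hmem).1
    omega
  have hne : ∀ v ∈ M, v ≠ u v := by
    intro v hv h
    have h1 := hDm2 v hv
    have h2 : G'.dist x (u v) = D := h ▸ ((hmemM v).mp hv).1
    omega
  -- adjacency characterization
  have hGadj : ∀ a b : V, G.Adj a b →
      G'.Adj a b ∨ (∃ v ∈ M, a = v ∧ b = u v) ∨ (∃ v ∈ M, a = u v ∧ b = v) := by
    intro a b hab
    rcases hab with h | h
    · exact Or.inl h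
    · rw [SimpleGraph.fromEdgeSet_adj] at h
      obtain ⟨⟨v, hv, he⟩, _⟩ := h
      rw [Sym2.eq_iff] at he
      rcases he with ⟨h1, h2⟩ | ⟨h1, h2⟩
      · exact Or.inr (Or.inl ⟨v, hv, h1, h2⟩)
      · exact Or.inr (Or.inr ⟨v, hv, h1, h2⟩)
  have hGadj' : ∀ v ∈ M, G.Adj v (u v) := by
    intro v hv
    exact Or.inr ((SimpleGraph.fromEdgeSet_adj _).mpr ⟨⟨v, hv, rfl⟩, hne v hv⟩)
  -- the coloring remains proper
  have hvalid : ∀ {a b : V}, G.Adj a b → c' a ≠ c' b := by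
    intro a b hab
    rcases hGadj a b hab with h | ⟨v, hv, ha, hb⟩ | ⟨v, hv, ha, hb⟩
    · exact c'.valid h
    · rw [ha, hb]; exact fun h => hcne v hv h.symm
    · rw [ha, hb]; exact hcne v hv
  set c : G.Coloring (Fin k) := SimpleGraph.Coloring.mk c' hvalid with hc
  have hGconn : G.Connected := hconn.mono hle
  -- the distance-like function in the new graph
  set f : V → ℕ := fun w => if w ∈ M then D - 1 else G'.dist x w with hf
  have hfM : ∀ w ∈ M, f w = D - 1 := by
    intro w hw; simp only [hf]; rw [if_pos hw]
  have hfnM : ∀ w ∉ M, f w = G'.dist x w := by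
    intro w hw; simp only [hf]; rw [if_neg hw]
  have hadjd : ∀ a b : V, G'.Adj a b → G'.dist x b ≤ G'.dist x a + 1 := by
    intro a b hab
    have htri := hconn.dist_triangle (u := x) (v := a) (w := b)
    have : G'.dist a b = 1 := SimpleGraph.dist_eq_one_iff_adj.mpr hab
    omega
  have hlip : ∀ a b : V, G.Adj a b → f b ≤ f a + 1 := by
    intro a b hab
    rcases hGadj a b hab with h | ⟨v, hv, ha, hb⟩ | ⟨v, hv, ha, hb⟩
    · have h1 := hadjd a b h
      have h2 := hadjd b a h.symm
      have h3 := hecc_le b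
      have h4 := hecc_le a
      by_cases hbM : b ∈ M <;> by_cases haM : a ∈ M
      · rw [hfM b hbM, hfM a haM]; omega
      · rw [hfM b hbM, hfnM a haM]
        have hb1 : G'.dist x b = D := ((hmemM b).mp hbM).1
        omega
      · rw [hfnM b hbM, hfM a haM]
        have ha1 : G'.dist x a = D := ((hmemM a).mp haM).1
        omega
      · rw [hfnM b hbM, hfnM a haM]; omega
    · rw [ha, hb]
      have h1 := hDm2 v hv
      rw [hfM v hv, hfnM _ (huM v hv), h1]
      omega
    · rw [ha, hb]
      have h1 := hDm2 v hv
      rw [hfM _ hv, hfnM _ (huM v hv), h1]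
      omega
  have hdx : G'.dist x x = 0 := SimpleGraph.dist_self
  have hxM : x ∉ M := by
    intro h
    have := ((hmemM x).mp h).1
    omega
  have hfx : f x = 0 := by rw [hfnM x hxM]; exact hdx
  -- upper bound for unmoved vertices
  have hupper : ∀ w, w ∉ M → G.dist x w ≤ G'.dist x w := by
    intro w hw
    obtain ⟨p, hp⟩ := hconn.exists_walk_length_eq_dist x w
    have := SimpleGraph.dist_le (p.mapLe hle)
    simpa [hp] using this
  have hdistf : ∀ w, G.dist x w = f w := by
    intro w
    have hlow : f w ≤ G.dist x w := by
      obtain ⟨p, hp⟩ := hGconn.exists_walk_length_eq_dist x w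
      have := walk_lower hlip p
      rw [hp, hfx] at this
      omega
    have hup : G.dist x w ≤ f w := by
      by_cases hw : w ∈ M
      · have h1 : G.dist x (u w) ≤ D - 2 := by
          have := hupper (u w) (huM w hw)
          rw [hDm2 w hw] at this
          exact this
        have h2 : G.dist (u w) w = 1 :=
          SimpleGraph.dist_eq_one_iff_adj.mpr (hGadj' w hw).symm
        have htri := hGconn.dist_triangle (u := x) (v := u w) (w := w)
        rw [hfM w hw]
        omega
      · rw [hfnM w hw]; exact hupper w hw
    omega
  have hlayerf : ∀ i, layer G x i = Finset.univ.filter (fun w => f w = i) := by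
    intro i
    simp only [layer]
    exact Finset.filter_congr fun w _ => by rw [hdistf]
  refine ⟨G, Classical.decRel _, c, x, hGconn, ?_, ?_, ?_, ?_, ?_, fun v => rfl, ?_⟩
  -- diameter
  · have hediam' : G'.ediam ≠ ⊤ := by
      apply SimpleGraph.ediam_ne_top_of_diam_ne_zero
      omega
    have hediam : G.ediam ≠ ⊤ := by
      intro h
      exact hediam' (top_le_iff.mp (h ▸ SimpleGraph.ediam_anti hle))
    have h1 : G.diam ≤ D := hdiam ▸ SimpleGraph.diam_anti_of_ediam_ne_top hle hediam'
    obtain ⟨w0, hw0d, hw0c⟩ := hA1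
    have hw0M : w0 ∉ M := fun h => ((hmemM w0).mp h).2 hw0c
    have h2 : G.dist x w0 = D := by
      rw [hdistf, hfnM w0 hw0M]
      exact hw0d
    have h3 : D ≤ G.diam := h2 ▸ SimpleGraph.dist_le_diam hediam
    omega
  -- min degree
  · intro v
    refine (hmindeg v).trans (Set.ncard_le_ncard ?_ (Set.toFinite _))
    intro w hw
    exact hle hw
  -- eccentricity bound
  · intro v
    rw [hdistf]
    by_cases h : v ∈ M
    · rw [hfM v h]; omega
    · rw [hfnM v h]; exact hecc_le v
  -- layer 0 monochromatic
  · have hl0 : layer G x 0 = {x} := by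
      rw [hlayerf]
      ext w
      simp only [Finset.mem_filter, Finset.mem_univ, true_and, Finset.mem_singleton]
      constructor
      · intro hw
        by_cases h : w ∈ M
        · rw [hfM w h] at hw; exact absurd hw (by omega)
        · rw [hfnM w h] at hw
          exact ((hconn.dist_eq_zero_iff (u := x) (v := w)).mp hw).symm
      · intro hw
        subst hw
        rw [hfnM w hxM]
        exact hdx
    rw [hl0]
    simp
  -- layer D monochromatic
  · have hset : layer G x D =
        Finset.univ.filter (fun w => G'.dist x w = D ∧ c' w = A) := by
      rw [hlayerf]
      ext w
      simp only [Finset.mem_filter, Finset.mem_univ, true_and]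
      by_cases hw : w ∈ M
      · rw [hfM w hw]
        constructor
        · intro h; exact absurd h (by omega)
        · intro h; exact absurd h.2 ((hmemM w).mp hw).2
      · rw [hfnM w hw]
        constructor
        · intro h
          refine ⟨h, ?_⟩
          by_contra hc'
          exact hw ((hmemM w).mpr ⟨h, hc'⟩)
        · exact fun h => h.1
    rw [hset]
    obtain ⟨w0, hw0d, hw0c⟩ := hA1
    rw [Finset.card_eq_one]
    refine ⟨A, ?_⟩
    ext b
    simp only [Finset.mem_image, Finset.mem_filter, Finset.mem_univ, true_and,
      Finset.mem_singleton]
    constructor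
    · rintro ⟨a, ⟨_, ha⟩, rfl⟩
      exact ha
    · rintro rfl
      exact ⟨w0, ⟨hw0d, hw0c⟩, hw0c⟩
  -- lower layers unchanged
  · intro i hi
    rw [hlayerf]
    ext w
    simp only [Finset.mem_filter, Finset.mem_univ, true_and, layer]
    by_cases hw : w ∈ M
    · rw [hfM w hw]
      have := ((hmemM w).mp hw).1
      constructor
      · intro h; omega
      · intro h; omega
    · rw [hfnM w hw]
end

section
/- In a graph G with a fixed proper k-coloring, distinguished vertex x, and distance layers L_0,...,L_D, adding all edges between differently colored vertices within a layer and between differently colored vertices in consecutive layers (saturation) preserves: the proper k-coloring, the distance from x of each vertex (hence all layers), and the diameter D; moreover it does not decrease any vertex degree. -/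
open SimpleGraph

lemma aux_ediam_ne_top {V : Type*} [Fintype V] [Nonempty V] {G : SimpleGraph V}
    (h : G.Connected) : G.ediam ≠ ⊤ := by
  obtain ⟨u, v, huv⟩ := G.exists_edist_eq_ediam_of_finite
  rw [← huv]
  exact (edist_ne_top_iff_reachable).2 (h u v)

lemma aux_walk_bound {V : Type*} [Fintype V] (G H : SimpleGraph V)
    (hconn : G.Connected) (x : V)
    (hstep : ∀ a b, H.Adj a b → G.dist x b ≤ G.dist x a + 1) :
    ∀ {a b : V} (w : H.Walk a b), G.dist x b ≤ G.dist x a + w.length := by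
  intro a b w
  induction w with
  | nil => simp
  | cons h p ih =>
    rename_i u u' v
    calc G.dist x v ≤ G.dist x u' + p.length := ih
    _ ≤ (G.dist x u + 1) + p.length := by
        have := hstep u u' h; omega
    _ = G.dist x u + (Walk.cons h p).length := by
        simp [Walk.length_cons]; omega

theorem stmt_5 {V : Type*} [Fintype V] [DecidableEq V] (k : ℕ)
    (G : SimpleGraph V) (hconn : G.Connected) (c : G.Coloring (Fin k))
    (x : V) (D : ℕ) (hD : G.diam = D)
    (hecc_le : ∀ v, G.dist x v ≤ D) (hecc_eq : ∃ v, G.dist x v = D)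
    (H : SimpleGraph V)
    (hH : ∀ u v, H.Adj u v ↔ (G.Adj u v ∨ (u ≠ v ∧ c u ≠ c v ∧
      (G.dist x u = G.dist x v ∨ G.dist x u + 1 = G.dist x v ∨
        G.dist x v + 1 = G.dist x u)))) :
    (∀ u v, H.Adj u v → c u ≠ c v) ∧
    (∀ v, H.dist x v = G.dist x v) ∧
    H.diam = D ∧
    (∀ v, (G.neighborSet v).ncard ≤ (H.neighborSet v).ncard) := by
  have hle : G ≤ H := fun {a b} hab => (hH a b).2 (Or.inl hab)
  have hne : Nonempty V := ⟨x⟩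
  have hHconn : H.Connected := hconn.mono hle
  have hGed : G.ediam ≠ ⊤ := aux_ediam_ne_top hconn
  have hHed : H.ediam ≠ ⊤ := aux_ediam_ne_top hHconn
  have hstep : ∀ a b, H.Adj a b → G.dist x b ≤ G.dist x a + 1 := by
    intro a b hab
    rcases (hH a b).1 hab with h | ⟨_, _, h⟩
    · have h1 : G.dist a b ≤ 1 := by
        rw [← dist_eq_one_iff_adj] at h; omega
      have := hconn.dist_triangle (u := x) (v := a) (w := b)
      omega
    · omega
  have hdist : ∀ v, H.dist x v = G.dist x v := by
    intro v
    refine le_antisymm ((hconn x v).dist_anti hle) ?_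
    obtain ⟨w, hw⟩ := (hHconn x v).exists_walk_length_eq_dist
    have := aux_walk_bound G H hconn x hstep w
    simpa [hw, SimpleGraph.dist_self] using this
  refine ⟨?_, hdist, ?_, ?_⟩
  · intro u v huv
    rcases (hH u v).1 huv with h | ⟨_, h, _⟩
    · exact c.valid h
    · exact h
  · refine le_antisymm ?_ ?_
    · have := diam_anti_of_ediam_ne_top hle hGed
      omega
    · obtain ⟨v, hv⟩ := hecc_eq
      have := H.dist_le_diam hHed (u := x) (v := v)
      rw [hdist v] at this
      omega
  · intro v
    exact Set.ncard_le_ncard (fun u hu => hle hu) (Set.toFinite _)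
end

section
/- Let H be a k-colorable layered graph with layers L_0,...,L_D (and L_{−1} = L_{D+1} = ∅), and for each i let S_i = {x ∈ L_i : every vertex of L_{i−1} ∪ L_{i+1} is adjacent to x}. Then for each i, |L_i| ≤ k − max(|S_{i−1}|, |S_{i+1}|). -/
theorem stmt_7 {V : Type*} [Fintype V] [DecidableEq V] (H : SimpleGraph V)
    [DecidableRel H.Adj] (k D : ℕ) (hcol : H.Colorable k)
    (L S : ℤ → Finset V)
    (hout : ∀ i : ℤ, (i < 0 ∨ (D : ℤ) < i) → L i = ∅)
    (hdisj : ∀ i j : ℤ, i ≠ j → Disjoint (L i) (L j))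
    (hcliq : ∀ i : ℤ, H.IsClique (L i : Set V))
    (hS : ∀ i : ℤ, S i = (L i).filter (fun x => ∀ y ∈ L (i - 1) ∪ L (i + 1), H.Adj x y)) :
    ∀ i : ℤ, 0 ≤ i → i ≤ (D : ℤ) →
      (L i).card ≤ k - max (S (i - 1)).card (S (i + 1)).card := by
  intro i _ _
  have key : ∀ j : ℤ, (j - 1 = i ∨ j + 1 = i) → (S j).card + (L i).card ≤ k := by
    intro j hj
    have hSL : S j ⊆ L j := by rw [hS j]; exact Finset.filter_subset _ _
    have hji : j ≠ i := by omega
    have hd : Disjoint (S j) (L i) := (hdisj j i hji).mono_left hSL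
    have hclique : H.IsClique ((S j ∪ L i : Finset V) : Set V) := by
      intro x hx y hy hxy
      simp only [Finset.coe_union, Set.mem_union, Finset.mem_coe] at hx hy
      have adj : ∀ a b : V, a ∈ S j → b ∈ L i → a ≠ b → H.Adj a b := by
        intro a b ha hb _
        rw [hS j, Finset.mem_filter] at ha
        exact ha.2 b (by rcases hj with h | h <;> rw [Finset.mem_union] <;>
          [left; right] <;> rwa [h])
      rcases hx with hx | hx <;> rcases hy with hy | hy
      · exact hcliq j (hSL hx) (hSL hy) hxy
      · exact adj x y hx hy hxy
      · exact (adj y x hy hx hxy.symm).symm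
      · exact hcliq i hx hy hxy
    have := hclique.card_le_of_colorable hcol
    rwa [Finset.card_union_of_disjoint hd] at this
  have h1 := key (i - 1) (by omega)
  have h2 := key (i + 1) (by omega)
  omega
end

section
/- With the notation S_i = {x ∈ L_i : L_{i−1} ∪ L_{i+1} ⊆ N(x)} in a k-colorable strongly canonical clump graph with D ≥ 2, one has |S_i| ≤ k − 1 for every layer index 0 ≤ i ≤ D. -/
theorem stmt_8 {V : Type*} [Fintype V] [DecidableEq V] (H : SimpleGraph V)
    [DecidableRel H.Adj] (k D : ℕ) (hk : 3 ≤ k) (hD : 2 ≤ D)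
    (hcol : H.Colorable k) (hconn : H.Connected) (x : V)
    (L S : ℤ → Finset V)
    (hL : ∀ (i : ℤ) (v : V), v ∈ L i ↔ (H.dist x v : ℤ) = i)
    (hecc : ∀ v, H.dist x v ≤ D)
    (hS : ∀ i : ℤ, S i = (L i).filter (fun y => ∀ z ∈ L (i - 1) ∪ L (i + 1), H.Adj y z))
    (hL0 : (L 0).card = 1) (hLD : (L (D : ℤ)).card = 1)
    (hfull : ∀ i : ℤ, (L i).card = k →
      2 ≤ i ∧ i ≤ (D : ℤ) - 1 ∧ 2 ≤ min (L (i - 1)).card (L (i + 1)).card)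
    (hmatch : ∀ i : ℤ, 1 ≤ i → i ≤ (D : ℤ) →
      (∀ p ∈ ((L (i - 1)) ×ˢ (L i)).filter (fun p => ¬ H.Adj p.1 p.2),
       ∀ q ∈ ((L (i - 1)) ×ˢ (L i)).filter (fun p => ¬ H.Adj p.1 p.2),
        (p.1 = q.1 ↔ p.2 = q.2)) ∧
      (((L (i - 1)) ×ˢ (L i)).filter (fun p => ¬ H.Adj p.1 p.2)).card
        = max k ((L (i - 1)).card + (L i).card) - k) :
    ∀ i : ℤ, 0 ≤ i → i ≤ (D : ℤ) → (S i).card ≤ k - 1 := by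
  intro i h0 hiD
  have hSsub : S i ⊆ L i := by rw [hS]; exact Finset.filter_subset _ _
  rcases eq_or_lt_of_le h0 with h0' | h1
  · -- i = 0
    subst h0'
    have := Finset.card_le_card hSsub
    omega
  · -- 1 ≤ i ≤ D
    have h1 : 1 ≤ i := h1
    obtain ⟨hm1, hm2⟩ := hmatch i h1 hiD
    set T := ((L (i - 1)) ×ˢ (L i)).filter (fun p => ¬ H.Adj p.1 p.2) with hT
    have hfstmem : ∀ p ∈ T, p.1 ∈ L (i - 1) := fun p hp =>
      (Finset.mem_product.mp (Finset.mem_filter.mp hp).1).1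
    have hsndmem : ∀ p ∈ T, p.2 ∈ L i := fun p hp =>
      (Finset.mem_product.mp (Finset.mem_filter.mp hp).1).2
    have hTa : T.card ≤ (L (i - 1)).card := by
      apply Finset.card_le_card_of_injOn Prod.fst hfstmem
      intro p hp q hq h
      exact Prod.ext h ((hm1 p hp q hq).mp h)
    have hbk : (L i).card ≤ k := by
      by_contra h
      push_neg at h
      have hmax : max k ((L (i - 1)).card + (L i).card) =
          (L (i - 1)).card + (L i).card := max_eq_right (by omega)
      omega
    rcases lt_or_eq_of_le hbk with hlt | heq
    · have := Finset.card_le_card hSsub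
      omega
    · obtain ⟨hi2, hiD1, hmin⟩ := hfull i heq
      have ha2 : 2 ≤ (L (i - 1)).card := le_trans hmin (min_le_left _ _)
      have hcardT : T.card = (L (i - 1)).card := by
        have hmax : max k ((L (i - 1)).card + (L i).card) =
            (L (i - 1)).card + (L i).card := max_eq_right (by omega)
        omega
      -- image of snd
      set I := T.image Prod.snd with hI
      have hcardI : I.card = T.card := by
        apply Finset.card_image_of_injOn
        intro p hp q hq h
        exact Prod.ext ((hm1 p hp q hq).mpr h) h
      have hIsub : I ⊆ L i := by
        intro y hy
        obtain ⟨p, hp, rfl⟩ := Finset.mem_image.mp hy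
        exact hsndmem p hp
      have hdisj : Disjoint I (S i) := by
        rw [Finset.disjoint_left]
        intro y hy hyS
        obtain ⟨p, hp, rfl⟩ := Finset.mem_image.mp hy
        rw [hS] at hyS
        have hadj := (Finset.mem_filter.mp hyS).2 p.1
          (Finset.mem_union_left _ (hfstmem p hp))
        exact (Finset.mem_filter.mp hp).2 hadj.symm
      have hunion : I ∪ S i ⊆ L i := Finset.union_subset hIsub hSsub
      have hcu : (I ∪ S i).card = I.card + (S i).card :=
        Finset.card_union_of_disjoint hdisj
      have := Finset.card_le_card hunion
      omega
end

section
/- In a k-colorable strongly canonical clump graph with D ≥ 2: if |S_i| = k − 1 for some i, then L_i = S_i and |L_{i−1}| = |S_{i−1}| = |L_{i+1}| = |S_{i+1}| = 1. -/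
open Finset

private lemma exists_dist_intermediate {V : Type*} (H : SimpleGraph V) (hconn : H.Connected)
    (x : V) : ∀ (d : ℕ) (v : V), H.dist x v = d → ∀ n ≤ d, ∃ u, H.dist x u = n := by
  intro d
  induction d with
  | zero => intro v hv n hn; exact ⟨v, by omega⟩
  | succ d ih =>
    intro v hv n hn
    rcases Nat.lt_or_ge n (d + 1) with h | h
    · obtain ⟨p, hp⟩ := (hconn x v).exists_walk_length_eq_dist
      have hlen : p.reverse.length = d + 1 := by
        rw [SimpleGraph.Walk.length_reverse, hp, hv]
      have hnil : ¬ p.reverse.Nil := by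
        rw [SimpleGraph.Walk.nil_iff_length_eq]; omega
      have hadj : H.Adj v (p.reverse.getVert 1) :=
        SimpleGraph.Walk.adj_snd hnil
      have htail : (p.reverse.tail).length = d := by
        have := SimpleGraph.Walk.length_tail_add_one hnil
        omega
      have h1 : H.dist x (p.reverse.getVert 1) ≤ d := by
        have := H.dist_le (p.reverse.tail.reverse)
        rwa [SimpleGraph.Walk.length_reverse, htail] at this
      have h2 : H.dist x (p.reverse.getVert 1) = d := by
        have t := hconn.dist_triangle (u := x) (v := p.reverse.getVert 1) (w := v)
        have hd1 : H.dist (p.reverse.getVert 1) v = 1 :=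
          SimpleGraph.dist_eq_one_iff_adj.2 hadj.symm
        omega
      exact ih _ h2 n (by omega)
    · exact ⟨v, by omega⟩

private lemma matching_images {α β : Type*} [DecidableEq α] [DecidableEq β]
    (F : Finset (α × β)) (hm : ∀ p ∈ F, ∀ q ∈ F, p.1 = q.1 ↔ p.2 = q.2) :
    (F.image Prod.fst).card = F.card ∧ (F.image Prod.snd).card = F.card := by
  constructor
  · exact Finset.card_image_of_injOn fun p hp q hq h => Prod.ext h ((hm p hp q hq).1 h)
  · exact Finset.card_image_of_injOn fun p hp q hq h => Prod.ext ((hm p hp q hq).2 h) h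

theorem stmt_11 {V : Type*} [Fintype V] [DecidableEq V] (H : SimpleGraph V)
    [DecidableRel H.Adj] (k D : ℕ) (hk : 3 ≤ k) (hD : 2 ≤ D)
    (hcol : H.Colorable k) (hconn : H.Connected) (x : V)
    (L S : ℤ → Finset V)
    (hL : ∀ (i : ℤ) (v : V), v ∈ L i ↔ (H.dist x v : ℤ) = i)
    (hecc : ∀ v, H.dist x v ≤ D)
    (hS : ∀ i : ℤ, S i = (L i).filter (fun y => ∀ z ∈ L (i - 1) ∪ L (i + 1), H.Adj y z))
    (hL0 : (L 0).card = 1) (hLD : (L (D : ℤ)).card = 1)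
    (hfull : ∀ i : ℤ, (L i).card = k →
      2 ≤ i ∧ i ≤ (D : ℤ) - 1 ∧ 2 ≤ min (L (i - 1)).card (L (i + 1)).card)
    (hmatch : ∀ i : ℤ, 1 ≤ i → i ≤ (D : ℤ) →
      (∀ p ∈ ((L (i - 1)) ×ˢ (L i)).filter (fun p => ¬ H.Adj p.1 p.2),
       ∀ q ∈ ((L (i - 1)) ×ˢ (L i)).filter (fun p => ¬ H.Adj p.1 p.2),
        (p.1 = q.1 ↔ p.2 = q.2)) ∧
      (((L (i - 1)) ×ˢ (L i)).filter (fun p => ¬ H.Adj p.1 p.2)).card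
        = max k ((L (i - 1)).card + (L i).card) - k) :
    ∀ i : ℤ, 0 ≤ i → i ≤ (D : ℤ) → (S i).card = k - 1 →
      L i = S i ∧ (L (i - 1)).card = 1 ∧ (S (i - 1)).card = 1 ∧
        (L (i + 1)).card = 1 ∧ (S (i + 1)).card = 1 := by
  intro i hi0 hiD hcard
  have hSsub : ∀ j : ℤ, S j ⊆ L j := fun j => by rw [hS]; exact filter_subset _ _
  -- empty layers outside [0, D]
  have hLneg : ∀ j : ℤ, j < 0 → L j = ∅ := by
    intro j hj
    ext v
    simp only [Finset.notMem_empty, iff_false, hL]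
    intro h
    have : (0 : ℤ) ≤ (H.dist x v : ℤ) := Int.natCast_nonneg _
    omega
  have hLbig : ∀ j : ℤ, (D : ℤ) < j → L j = ∅ := by
    intro j hj
    ext v
    simp only [Finset.notMem_empty, iff_false, hL]
    intro h
    have := hecc v
    have : (H.dist x v : ℤ) ≤ (D : ℤ) := by exact_mod_cast this
    omega
  -- nonempty layers in [0, D]
  obtain ⟨v, hv⟩ := Finset.card_pos.1 (by omega : 0 < (L (D : ℤ)).card)
  have hvD : H.dist x v = D := by
    have := (hL (D : ℤ) v).1 hv
    exact_mod_cast this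
  have hne : ∀ j : ℤ, 0 ≤ j → j ≤ (D : ℤ) → (L j).Nonempty := by
    intro j hj1 hj2
    obtain ⟨n, rfl⟩ := Int.eq_ofNat_of_zero_le hj1
    obtain ⟨u, hu⟩ := exists_dist_intermediate H hconn x D v hvD n (by exact_mod_cast hj2)
    exact ⟨u, (hL _ u).2 (by exact_mod_cast congrArg (Nat.cast : ℕ → ℤ) hu)⟩
  -- i is strictly between 0 and D
  have hi1 : 1 ≤ i := by
    by_contra h
    have hieq : i = 0 := by omega
    have := Finset.card_le_card (hSsub i)
    rw [hieq] at this hcard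
    omega
  have hiD1 : i ≤ (D : ℤ) - 1 := by
    by_contra h
    have hieq : i = (D : ℤ) := by omega
    have := Finset.card_le_card (hSsub i)
    rw [hieq] at this hcard
    omega
  obtain ⟨hm, hc⟩ := hmatch i hi1 (by omega)
  set F := ((L (i - 1)) ×ˢ (L i)).filter (fun p => ¬ H.Adj p.1 p.2) with hF
  obtain ⟨hFfst, hFsnd⟩ := matching_images F hm
  have hfstsub : F.image Prod.fst ⊆ L (i - 1) := by
    intro y hy
    obtain ⟨p, hp, rfl⟩ := Finset.mem_image.1 hy
    exact (Finset.mem_product.1 (Finset.mem_filter.1 hp).1).1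
  have hsndsub : F.image Prod.snd ⊆ L i := by
    intro y hy
    obtain ⟨p, hp, rfl⟩ := Finset.mem_image.1 hy
    exact (Finset.mem_product.1 (Finset.mem_filter.1 hp).1).2
  have hFlea : F.card ≤ (L (i - 1)).card := hFfst ▸ Finset.card_le_card hfstsub
  have hmaxge : k + (L (i - 1)).card + (L i).card ≤ k + max k ((L (i - 1)).card + (L i).card) := by
    have := le_max_right k ((L (i - 1)).card + (L i).card); omega
  have hbk : (L i).card ≤ k := by omega
  have hbk1 : k - 1 ≤ (L i).card := by
    have := Finset.card_le_card (hSsub i); omega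
  -- rule out (L i).card = k
  have hbne : (L i).card ≠ k := by
    intro hb
    obtain ⟨-, -, hmin⟩ := hfull i hb
    have ha2 : 2 ≤ (L (i - 1)).card := le_trans hmin (min_le_left _ _)
    have hFcard : F.card = (L (i - 1)).card := by
      rw [hc, hb, max_eq_right (by omega)]; omega
    -- the snd-image is disjoint from S i
    have hdisj : Disjoint (S i) (F.image Prod.snd) := by
      rw [Finset.disjoint_left]
      intro y hyS hyT
      obtain ⟨p, hp, rfl⟩ := Finset.mem_image.1 hyT
      have hp' := Finset.mem_filter.1 hp
      have h1 : p.1 ∈ L (i - 1) := (Finset.mem_product.1 hp'.1).1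
      have hyS' := Finset.mem_filter.1 (by rw [hS] at hyS; exact hyS)
      exact hp'.2 ((hyS'.2 p.1 (Finset.mem_union_left _ h1)).symm)
    have hsubu : S i ∪ F.image Prod.snd ⊆ L i :=
      Finset.union_subset (hSsub i) hsndsub
    have := Finset.card_le_card hsubu
    rw [Finset.card_union_of_disjoint hdisj] at this
    omega
  have hb : (L i).card = k - 1 := by omega
  have hLS : L i = S i :=
    (Finset.eq_of_subset_of_card_le (hSsub i) (by omega)).symm
  have hSadj : ∀ y ∈ L i, ∀ z ∈ L (i - 1) ∪ L (i + 1), H.Adj y z := by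
    intro y hy
    rw [hLS, hS] at hy
    exact (Finset.mem_filter.1 hy).2
  -- no non-edges between L (i-1) and L i
  have hFempty : F = ∅ := by
    rw [hF, Finset.filter_eq_empty_iff]
    intro p hp
    have hp' := Finset.mem_product.1 hp
    exact fun hn => hn ((hSadj p.2 hp'.2 p.1 (Finset.mem_union_left _ hp'.1)).symm)
  have ha1 : (L (i - 1)).card = 1 := by
    have h0 : F.card = 0 := by rw [hFempty]; simp
    have hge : (L (i - 1)).Nonempty := hne _ (by omega) (by omega)
    have := Finset.card_pos.2 hge
    rw [hc] at h0
    omega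
  -- right side
  obtain ⟨hm', hc'⟩ := hmatch (i + 1) (by omega) (by omega)
  have e1 : i + 1 - 1 = i := by ring
  rw [e1] at hm' hc'
  set F' := ((L i) ×ˢ (L (i + 1))).filter (fun p => ¬ H.Adj p.1 p.2) with hF'
  have hF'empty : F' = ∅ := by
    rw [hF', Finset.filter_eq_empty_iff]
    intro p hp
    have hp' := Finset.mem_product.1 hp
    exact fun hn => hn (hSadj p.1 hp'.1 p.2 (Finset.mem_union_right _ hp'.2))
  have hc1 : (L (i + 1)).card = 1 := by
    have h0 : F'.card = 0 := by rw [hF'empty]; simp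
    have hge : (L (i + 1)).Nonempty := hne _ (by omega) (by omega)
    have := Finset.card_pos.2 hge
    rw [hc'] at h0
    have := le_max_right k ((L i).card + (L (i + 1)).card)
    omega
  -- S (i-1)
  obtain ⟨u, hu⟩ := Finset.card_eq_one.1 ha1
  have huL : u ∈ L (i - 1) := by rw [hu]; exact Finset.mem_singleton_self u
  have huS : u ∈ S (i - 1) := by
    rw [hS]
    refine Finset.mem_filter.2 ⟨huL, ?_⟩
    intro z hz
    rcases Finset.mem_union.1 hz with hz | hz
    · -- z ∈ L (i - 1 - 1) = L (i - 2)
      have e2 : i - 1 - 1 = i - 2 := by ring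
      rw [e2] at hz
      rcases lt_or_ge (i - 2) 0 with hneg | hpos
      · rw [hLneg _ hneg] at hz; exact absurd hz (Finset.notMem_empty z)
      · obtain ⟨hm2, hc2⟩ := hmatch (i - 1) (by omega) (by omega)
        have e3 : i - 1 - 1 = i - 2 := by ring
        rw [e3] at hm2 hc2
        have hsnd2 := (matching_images _ hm2).2
        have hsub2 : (((L (i - 2)) ×ˢ (L (i - 1))).filter
            (fun p => ¬ H.Adj p.1 p.2)).image Prod.snd ⊆ L (i - 1) := by
          intro y hy
          obtain ⟨p, hp, rfl⟩ := Finset.mem_image.1 hy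
          exact (Finset.mem_product.1 (Finset.mem_filter.1 hp).1).2
        have hle2 : (((L (i - 2)) ×ˢ (L (i - 1))).filter
            (fun p => ¬ H.Adj p.1 p.2)).card ≤ 1 := by
          rw [← hsnd2]
          have := Finset.card_le_card hsub2
          omega
        have ha2k : (L (i - 2)).card ≤ k - 1 := by
          by_contra hcon
          have hle : (L (i - 2)).card ≤ k := by
            have := le_max_right k ((L (i - 2)).card + (L (i - 1)).card)
            rw [hc2] at hle2
            omega
          have hak : (L (i - 2)).card = k := by omega
          obtain ⟨-, -, hmin2⟩ := hfull (i - 2) hak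
          have e4 : i - 2 + 1 = i - 1 := by ring
          rw [e4] at hmin2
          have := le_trans hmin2 (min_le_right _ _)
          omega
        have h02 : (((L (i - 2)) ×ˢ (L (i - 1))).filter
            (fun p => ¬ H.Adj p.1 p.2)).card = 0 := by
          rw [hc2, max_eq_left (by omega)]; omega
        have hemp := Finset.card_eq_zero.1 h02
        by_contra hadj
        have : (z, u) ∈ ((L (i - 2)) ×ˢ (L (i - 1))).filter
            (fun p => ¬ H.Adj p.1 p.2) := by
          refine Finset.mem_filter.2 ⟨Finset.mem_product.2 ⟨hz, huL⟩, ?_⟩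
          exact fun hn => hadj hn.symm
        rw [hemp] at this
        exact absurd this (Finset.notMem_empty _)
    · -- z ∈ L (i - 1 + 1) = L i
      have e2 : i - 1 + 1 = i := by ring
      rw [e2] at hz
      by_contra hadj
      have : (u, z) ∈ F := by
        rw [hF]
        exact Finset.mem_filter.2 ⟨Finset.mem_product.2 ⟨huL, hz⟩, hadj⟩
      rw [hFempty] at this
      exact absurd this (Finset.notMem_empty _)
  have hS1 : (S (i - 1)).card = 1 := by
    have hsub := hSsub (i - 1)
    have h1 := Finset.card_le_card hsub
    have h2 := Finset.card_pos.2 ⟨u, huS⟩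
    omega
  -- S (i+1)
  obtain ⟨w, hw⟩ := Finset.card_eq_one.1 hc1
  have hwL : w ∈ L (i + 1) := by rw [hw]; exact Finset.mem_singleton_self w
  have hwS : w ∈ S (i + 1) := by
    rw [hS]
    refine Finset.mem_filter.2 ⟨hwL, ?_⟩
    intro z hz
    rcases Finset.mem_union.1 hz with hz | hz
    · -- z ∈ L (i + 1 - 1) = L i
      rw [e1] at hz
      by_contra hadj
      have : (z, w) ∈ F' := by
        rw [hF']
        exact Finset.mem_filter.2 ⟨Finset.mem_product.2 ⟨hz, hwL⟩,
          fun hn => hadj hn.symm⟩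
      rw [hF'empty] at this
      exact absurd this (Finset.notMem_empty _)
    · -- z ∈ L (i + 2)
      have e5 : i + 1 + 1 = i + 2 := by ring
      rw [e5] at hz
      rcases lt_or_ge (D : ℤ) (i + 2) with hbig | hle
      · rw [hLbig _ hbig] at hz; exact absurd hz (Finset.notMem_empty z)
      · obtain ⟨hm2, hc2⟩ := hmatch (i + 2) (by omega) (by omega)
        have e3 : i + 2 - 1 = i + 1 := by ring
        rw [e3] at hm2 hc2
        have hfst2 := (matching_images _ hm2).1
        have hsub2 : (((L (i + 1)) ×ˢ (L (i + 2))).filter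
            (fun p => ¬ H.Adj p.1 p.2)).image Prod.fst ⊆ L (i + 1) := by
          intro y hy
          obtain ⟨p, hp, rfl⟩ := Finset.mem_image.1 hy
          exact (Finset.mem_product.1 (Finset.mem_filter.1 hp).1).1
        have hle2 : (((L (i + 1)) ×ˢ (L (i + 2))).filter
            (fun p => ¬ H.Adj p.1 p.2)).card ≤ 1 := by
          rw [← hfst2]
          have := Finset.card_le_card hsub2
          omega
        have ha2k : (L (i + 2)).card ≤ k - 1 := by
          by_contra hcon
          have hle' : (L (i + 2)).card ≤ k := by
            have := le_max_right k ((L (i + 1)).card + (L (i + 2)).card)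
            rw [hc2] at hle2
            omega
          have hak : (L (i + 2)).card = k := by omega
          obtain ⟨-, -, hmin2⟩ := hfull (i + 2) hak
          have e4 : i + 2 - 1 = i + 1 := by ring
          rw [e4] at hmin2
          have := le_trans hmin2 (min_le_left _ _)
          omega
        have h02 : (((L (i + 1)) ×ˢ (L (i + 2))).filter
            (fun p => ¬ H.Adj p.1 p.2)).card = 0 := by
          rw [hc2, max_eq_left (by omega)]; omega
        have hemp := Finset.card_eq_zero.1 h02
        by_contra hadj
        have : (w, z) ∈ ((L (i + 1)) ×ˢ (L (i + 2))).filter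
            (fun p => ¬ H.Adj p.1 p.2) := by
          exact Finset.mem_filter.2 ⟨Finset.mem_product.2 ⟨hwL, hz⟩, hadj⟩
        rw [hemp] at this
        exact absurd this (Finset.notMem_empty _)
  have hS2 : (S (i + 1)).card = 1 := by
    have hsub := hSsub (i + 1)
    have h1 := Finset.card_le_card hsub
    have h2 := Finset.card_pos.2 ⟨w, hwS⟩
    omega
  exact ⟨hLS, ha1, hS1, hc1, hS2⟩
end
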